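/- arXiv:1608.00722 — 7 statements merged into one kernel-verified Lean document; each statement's English description precedes it below -/
import Mathlib

section
/- (Proposition 3.1, Type-I BPSK symbols.) Let P ≥ 0 and A ≥ 0. For every complex number z with |z|² = A, the probability that a real Gaussian random variable with mean 0 and variance 1/2 is smaller than −√P − Re(z) is at least 1/2 − (1/2)·erf(√A + √P); moreover, equality holds for the choice z = √A (a real spoofing signal aligned with the transmitted symbol). Formally: for all z : ℂ with Complex.abs z ^ 2 = A, ((gaussianReal 0 (1/2)) (Set.Iio (−√P − z.re))).toReal ≥ 1/2 − (1/2)·erf(√A + √P), with equality when z = (√A : ℂ). -/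
open MeasureTheory ProbabilityTheory Real Set

noncomputable def erf (x : ℝ) : ℝ :=
  (2 / Real.sqrt Real.pi) * ∫ t in (0:ℝ)..x, Real.exp (-t^2)

lemma integrable_g : Integrable (fun x : ℝ => Real.exp (-x^2)) := by
  simpa using integrable_exp_neg_mul_sq (b := 1) one_pos

lemma gauss_Iio (c : ℝ) :
    ((gaussianReal 0 (1/2)) (Set.Iio c)).toReal = 1/2 + (1/2) * erf c := by
  rw [gaussianReal_apply_eq_integral 0 (by norm_num) (Set.Iio c),
    ENNReal.toReal_ofReal (integral_nonneg (fun x => gaussianPDFReal_nonneg _ _ _))]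
  have hpdf : ∀ x : ℝ, gaussianPDFReal 0 (1/2) x = (Real.sqrt π)⁻¹ * Real.exp (-x^2) := by
    intro x
    unfold gaussianPDFReal
    push_cast
    ring_nf
  simp_rw [hpdf]
  rw [integral_const_mul]
  have h1 : ∫ x in Set.Iio c, Real.exp (-x^2) = ∫ x in Set.Iic c, Real.exp (-x^2) :=
    setIntegral_congr_set Iio_ae_eq_Iic
  have h0 : ∫ x in Set.Iic (0:ℝ), Real.exp (-x^2) = Real.sqrt π / 2 := by
    rw [← neg_zero, ← integral_comp_neg_Ioi]
    simp_rw [neg_sq]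
    simpa using integral_gaussian_Ioi 1
  have h2 := intervalIntegral.integral_Iic_sub_Iic (f := fun x : ℝ => Real.exp (-x^2)) (μ := volume)
    (a := 0) (b := c) integrable_g.integrableOn integrable_g.integrableOn
  have hπ : Real.sqrt π ≠ 0 := by positivity
  rw [h1, show ∫ x in Set.Iic c, Real.exp (-x^2)
      = Real.sqrt π / 2 + ∫ t in (0:ℝ)..c, Real.exp (-t^2) by rw [← h0]; linarith [h2]]
  unfold erf
  field_simp

lemma erf_neg (x : ℝ) : erf (-x) = - erf x := by
  unfold erf
  have : ∫ t in (0:ℝ)..(-x), Real.exp (-t^2)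
      = - ∫ t in (0:ℝ)..x, Real.exp (-t^2) := by
    calc ∫ t in (0:ℝ)..(-x), Real.exp (-t^2)
        = ∫ t in (0:ℝ)..(-x), Real.exp (-(-t)^2) := by simp
      _ = ∫ t in (-(-x))..(-0:ℝ), Real.exp (-t^2) :=
          intervalIntegral.integral_comp_neg (fun t => Real.exp (-t^2))
      _ = ∫ t in x..(0:ℝ), Real.exp (-t^2) := by norm_num
      _ = - ∫ t in (0:ℝ)..x, Real.exp (-t^2) := intervalIntegral.integral_symm _ _
  rw [this]; ring

theorem stmt_1 (P A : ℝ) (hP : 0 ≤ P) (hA : 0 ≤ A) :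
    (∀ z : ℂ, ‖z‖ ^ 2 = A →
       ((gaussianReal 0 (1/2)) (Set.Iio (-Real.sqrt P - z.re))).toReal ≥
         1/2 - (1/2) * erf (Real.sqrt A + Real.sqrt P)) ∧
    ((gaussianReal 0 (1/2))
         (Set.Iio (-Real.sqrt P - ((Real.sqrt A : ℂ)).re))).toReal =
       1/2 - (1/2) * erf (Real.sqrt A + Real.sqrt P) := by
  have key : ((gaussianReal 0 (1/2)) (Set.Iio (-Real.sqrt P - Real.sqrt A))).toReal
      = 1/2 - (1/2) * erf (Real.sqrt A + Real.sqrt P) := by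
    rw [gauss_Iio, show -Real.sqrt P - Real.sqrt A = -(Real.sqrt A + Real.sqrt P) by ring,
      erf_neg]
    ring
  constructor
  · intro z hz
    have habs : ‖z‖ = Real.sqrt A := by
      rw [← hz, Real.sqrt_sq (norm_nonneg z)]
    have hre : z.re ≤ Real.sqrt A := habs ▸ Complex.re_le_norm z
    have hsub : Set.Iio (-Real.sqrt P - Real.sqrt A) ⊆ Set.Iio (-Real.sqrt P - z.re) :=
      Set.Iio_subset_Iio (by linarith)
    have := ENNReal.toReal_mono (measure_ne_top (gaussianReal 0 (1/2)) _) (measure_mono hsub)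
    rw [key] at this
    exact this
  · simpa using key
end

section
/- (Lemma 3.1.) Let P ≥ 0 and define f₁ : ℝ → ℝ by f₁(A) = 1/2 − (1/2)·erf(√A + √P). Then f₁ is monotonically decreasing on [0, ∞) (AntitoneOn f₁ (Set.Ici 0)) and convex on [0, ∞) (ConvexOn ℝ (Set.Ici 0) f₁). -/
open MeasureTheory ProbabilityTheory Real Set

lemma cont_exp_sq : Continuous fun t : ℝ => Real.exp (-t^2) := by
  continuity

lemma erf_hasDerivAt (x : ℝ) :
    HasDerivAt erf ((2 / Real.sqrt Real.pi) * Real.exp (-x^2)) x := by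
  have h := (cont_exp_sq.integral_hasStrictDerivAt 0 x).hasDerivAt
  exact h.const_mul (2 / Real.sqrt Real.pi)

lemma erf_monotone : Monotone erf := by
  intro a b hab
  have hint : ∀ u v : ℝ, IntervalIntegrable (fun t => Real.exp (-t^2)) volume u v :=
    fun u v => cont_exp_sq.intervalIntegrable u v
  have hsplit : (∫ t in (0:ℝ)..b, Real.exp (-t^2))
      = (∫ t in (0:ℝ)..a, Real.exp (-t^2)) + ∫ t in a..b, Real.exp (-t^2) :=
    (intervalIntegral.integral_add_adjacent_intervals (hint 0 a) (hint a b)).symm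
  have hpos : 0 ≤ ∫ t in a..b, Real.exp (-t^2) :=
    intervalIntegral.integral_nonneg hab (fun t _ => (Real.exp_pos _).le)
  have hc : 0 ≤ 2 / Real.sqrt Real.pi := by positivity
  unfold erf
  rw [hsplit]
  nlinarith

theorem stmt_3 (P : ℝ) (hP : 0 ≤ P)
    (f₁ : ℝ → ℝ) (hf₁ : ∀ A, f₁ A = 1/2 - (1/2) * erf (Real.sqrt A + Real.sqrt P)) :
    AntitoneOn f₁ (Set.Ici 0) ∧ ConvexOn ℝ (Set.Ici 0) f₁ := by
  set h : ℝ → ℝ := fun u => 1/2 - (1/2) * erf (u + Real.sqrt P) with hh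
  have hfe : f₁ = h ∘ Real.sqrt := by
    funext A; simp [hh, hf₁ A]
  have hanti : Antitone h := by
    intro u v huv
    have := erf_monotone (by linarith : u + Real.sqrt P ≤ v + Real.sqrt P)
    simp only [hh]
    linarith
  constructor
  · intro a ha b hb hab
    rw [hfe]
    exact hanti (Real.sqrt_le_sqrt hab)
  · -- h has derivative
    have hder : ∀ u : ℝ, HasDerivAt h
        (-((1 / Real.sqrt Real.pi) * Real.exp (-(u + Real.sqrt P)^2))) u := by
      intro u
      have h1 : HasDerivAt (fun u : ℝ => u + Real.sqrt P) 1 u :=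
        (hasDerivAt_id u).add_const _
      have h2 := (erf_hasDerivAt (u + Real.sqrt P)).comp u h1
      have h3 := (h2.const_mul (1/2 : ℝ)).const_sub (1/2 : ℝ)
      refine h3.congr_deriv ?_
      ring
    have hderiv : ∀ u : ℝ, deriv h u
        = -((1 / Real.sqrt Real.pi) * Real.exp (-(u + Real.sqrt P)^2)) :=
      fun u => (hder u).deriv
    have hconv : ConvexOn ℝ (Set.Ici (0:ℝ)) h := by
      apply MonotoneOn.convexOn_of_deriv (convex_Ici 0)
      · exact fun u _ => ((hder u).continuousAt).continuousWithinAt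
      · exact fun u _ => ((hder u).differentiableAt).differentiableWithinAt
      · intro u hu v hv huv
        rw [interior_Ici] at hu hv
        rw [hderiv u, hderiv v]
        have h0u : (0:ℝ) ≤ u + Real.sqrt P := by
          have := Real.sqrt_nonneg P; have : (0:ℝ) < u := hu; positivity
        have : (u + Real.sqrt P)^2 ≤ (v + Real.sqrt P)^2 := by nlinarith
        have := Real.exp_le_exp.mpr (by linarith : -(v + Real.sqrt P)^2 ≤ -(u + Real.sqrt P)^2)
        have hs : 0 ≤ 1 / Real.sqrt Real.pi := by positivity
        nlinarith
    rw [hfe]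
    have himg : Real.sqrt '' Set.Ici 0 = Set.Ici (0:ℝ) := by
      apply Set.Subset.antisymm
      · rintro x ⟨y, _, rfl⟩; exact Real.sqrt_nonneg y
      · intro x hx
        exact ⟨x^2, sq_nonneg x, Real.sqrt_sq hx⟩
    refine ConvexOn.comp_concaveOn ?_ (Real.strictConcaveOn_sqrt.concaveOn)
      (fun x _ y _ hxy => hanti hxy)
    rwa [himg]
end

section
/- (Lemma 3.2, high-power case.) Let P > 2 and define f₂ : ℝ → ℝ by f₂(B) = 1/2 − (1/2)·erf(√B − √P). Set ζ₁ = ((√P − √(P−2))/2)² and ζ₂ = ((√P + √(P−2))/2)², so ζ₁ < ζ₂. Then f₂ is convex on [0, ζ₁] (ConvexOn ℝ (Set.Icc 0 ζ₁) f₂), concave on [ζ₁, ζ₂] (ConcaveOn ℝ (Set.Icc ζ₁ ζ₂) f₂), and convex on [ζ₂, ∞) (ConvexOn ℝ (Set.Ici ζ₂) f₂). -/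
open MeasureTheory ProbabilityTheory Real Set

lemma hasDerivAt_erf (x : ℝ) :
    HasDerivAt erf (2 / Real.sqrt Real.pi * Real.exp (-x^2)) x := by
  have hc : Continuous fun t : ℝ => Real.exp (-t^2) := by continuity
  have hE : HasDerivAt (fun y => ∫ t in (0:ℝ)..y, Real.exp (-t^2)) (Real.exp (-x^2)) x :=
    intervalIntegral.integral_hasDerivAt_right (hc.intervalIntegrable _ _)
      (hc.stronglyMeasurableAtFilter _ _) hc.continuousAt
  unfold erf
  exact hE.const_mul (2 / Real.sqrt Real.pi)

lemma continuous_erf : Continuous erf := by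
  have h : Differentiable ℝ erf := fun x => (hasDerivAt_erf x).differentiableAt
  exact h.continuous

theorem stmt_6 (P : ℝ) (hP : 2 < P)
    (f₂ : ℝ → ℝ) (hf₂ : ∀ B, f₂ B = 1/2 - (1/2) * erf (Real.sqrt B - Real.sqrt P))
    (ζ₁ ζ₂ : ℝ)
    (hζ₁ : ζ₁ = ((Real.sqrt P - Real.sqrt (P - 2)) / 2)^2)
    (hζ₂ : ζ₂ = ((Real.sqrt P + Real.sqrt (P - 2)) / 2)^2) :
    ζ₁ < ζ₂ ∧
    ConvexOn ℝ (Set.Icc 0 ζ₁) f₂ ∧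
    ConcaveOn ℝ (Set.Icc ζ₁ ζ₂) f₂ ∧
    ConvexOn ℝ (Set.Ici ζ₂) f₂ := by
  have hP0 : (0:ℝ) < P := by linarith
  have hff : f₂ = fun B => 1/2 - 1/2 * erf (Real.sqrt B - Real.sqrt P) := funext hf₂
  subst hff
  set c := Real.sqrt P with hc
  set d := Real.sqrt (P - 2) with hd
  have hdc : d < c := Real.sqrt_lt_sqrt (by linarith) (by linarith)
  have hdpos : 0 < d := Real.sqrt_pos.2 (by linarith)
  have hcsq : c^2 = P := Real.sq_sqrt hP0.le
  have hdsq : d^2 = P - 2 := Real.sq_sqrt (by linarith)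
  set u₁ := (c - d)/2 with hu₁def
  set u₂ := (c + d)/2 with hu₂def
  have hu₁ : 0 < u₁ := by rw [hu₁def]; linarith
  have hu₂ : 0 < u₂ := by rw [hu₂def]; linarith
  have h12 : u₁ < u₂ := by rw [hu₁def, hu₂def]; linarith
  have hz1 : ζ₁ = u₁^2 := hζ₁
  have hz2 : ζ₂ = u₂^2 := hζ₂
  have hsz1 : Real.sqrt ζ₁ = u₁ := by rw [hz1]; exact Real.sqrt_sq hu₁.le
  have hsz2 : Real.sqrt ζ₂ = u₂ := by rw [hz2]; exact Real.sqrt_sq hu₂.le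
  have hζ₁pos : 0 < ζ₁ := by rw [hz1]; positivity
  have hζ₂pos : 0 < ζ₂ := by rw [hz2]; positivity
  have hsum : u₁ + u₂ = c := by rw [hu₁def, hu₂def]; ring
  have hprod : u₁ * u₂ = 1/2 := by
    have h : u₁ * u₂ = (c^2 - d^2)/4 := by rw [hu₁def, hu₂def]; ring
    rw [h, hcsq, hdsq]; ring
  have key : ∀ u : ℝ, u^2 - c*u + 1/2 = (u - u₁)*(u - u₂) := by
    intro u
    have h : (u - u₁)*(u - u₂) = u^2 - (u₁ + u₂)*u + u₁*u₂ := by ring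
    rw [h, hsum, hprod]
  have hπ : 0 < Real.sqrt Real.pi := Real.sqrt_pos.2 Real.pi_pos
  set F : ℝ → ℝ := fun B =>
    -(Real.exp (-(Real.sqrt B - c)^2) * (Real.sqrt B)⁻¹ / (2 * Real.sqrt Real.pi)) with hFdef
  set G : ℝ → ℝ := fun B =>
    Real.exp (-(Real.sqrt B - c)^2) * ((Real.sqrt B)^2 - c * Real.sqrt B + 1/2) /
      (2 * Real.sqrt Real.pi * (Real.sqrt B)^2 * Real.sqrt B) with hGdef
  have hF : ∀ B : ℝ, 0 < B →
      HasDerivAt (fun B => 1/2 - 1/2 * erf (Real.sqrt B - c)) (F B) B := by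
    intro B hB
    have hsB : (0:ℝ) < Real.sqrt B := Real.sqrt_pos.2 hB
    have hs := Real.hasDerivAt_sqrt hB.ne'
    have h1 := ((hasDerivAt_erf (Real.sqrt B - c)).comp B (hs.sub_const c)).const_mul (1/2 : ℝ)
    have h2 := h1.const_sub (1/2 : ℝ)
    refine h2.congr_deriv ?_
    rw [hFdef]
    field_simp
  have hG : ∀ B : ℝ, 0 < B → HasDerivAt F (G B) B := by
    intro B hB
    have hsB : (0:ℝ) < Real.sqrt B := Real.sqrt_pos.2 hB
    have hs := Real.hasDerivAt_sqrt hB.ne'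
    have hexp := (((hs.sub_const c).pow 2).neg).exp
    have hinv := hs.inv hsB.ne'
    have h := ((hexp.mul hinv).div_const (2 * Real.sqrt Real.pi)).neg
    have hBu : Real.sqrt B ^ 2 = B := Real.sq_sqrt hB.le
    refine h.congr_deriv ?_
    rw [hGdef]
    simp only [Pi.neg_apply, Pi.pow_apply, Pi.inv_apply]
    generalize hgen : Real.sqrt B = s at hBu hsB ⊢
    push_cast
    field_simp
    ring
  have hcont : Continuous fun B => 1/2 - 1/2 * erf (Real.sqrt B - c) :=
    continuous_const.sub
      (continuous_const.mul (continuous_erf.comp (Real.continuous_sqrt.sub continuous_const)))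
  refine ⟨by rw [hz1, hz2]; exact pow_lt_pow_left₀ h12 hu₁.le (by norm_num), ?_, ?_, ?_⟩
  · -- convex on [0, ζ₁]
    refine convexOn_of_hasDerivWithinAt2_nonneg (f' := F) (f'' := G) (convex_Icc _ _)
      hcont.continuousOn ?_ ?_ ?_
    · rw [interior_Icc]; intro x hx; exact (hF x hx.1).hasDerivWithinAt
    · rw [interior_Icc]; intro x hx; exact (hG x hx.1).hasDerivWithinAt
    · rw [interior_Icc]
      intro x hx
      have hx0 : 0 < x := hx.1
      have hsx : 0 < Real.sqrt x := Real.sqrt_pos.2 hx0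
      have h1 : Real.sqrt x < u₁ := by
        rw [← hsz1]; exact Real.sqrt_lt_sqrt hx0.le hx.2
      have h2 : Real.sqrt x < u₂ := h1.trans h12
      have hnum : 0 ≤ (Real.sqrt x)^2 - c * Real.sqrt x + 1/2 := by
        rw [key]
        nlinarith [mul_pos (sub_pos.2 h1) (sub_pos.2 h2)]
      rw [hGdef]
      exact div_nonneg (mul_nonneg (Real.exp_pos _).le hnum) (by positivity)
  · -- concave on [ζ₁, ζ₂]
    refine concaveOn_of_hasDerivWithinAt2_nonpos (f' := F) (f'' := G) (convex_Icc _ _)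
      hcont.continuousOn ?_ ?_ ?_
    · rw [interior_Icc]; intro x hx; exact (hF x (hζ₁pos.trans hx.1)).hasDerivWithinAt
    · rw [interior_Icc]; intro x hx; exact (hG x (hζ₁pos.trans hx.1)).hasDerivWithinAt
    · rw [interior_Icc]
      intro x hx
      have hx0 : 0 < x := hζ₁pos.trans hx.1
      have h1 : u₁ < Real.sqrt x := by
        rw [← hsz1]; exact Real.sqrt_lt_sqrt hζ₁pos.le hx.1
      have h2 : Real.sqrt x < u₂ := by
        rw [← hsz2]; exact Real.sqrt_lt_sqrt hx0.le hx.2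
      have hnum : (Real.sqrt x)^2 - c * Real.sqrt x + 1/2 ≤ 0 := by
        rw [key]
        exact mul_nonpos_of_nonneg_of_nonpos (by linarith) (by linarith)
      rw [hGdef]
      apply div_nonpos_of_nonpos_of_nonneg
      · exact mul_nonpos_of_nonneg_of_nonpos (Real.exp_pos _).le hnum
      · positivity
  · -- convex on [ζ₂, ∞)
    refine convexOn_of_hasDerivWithinAt2_nonneg (f' := F) (f'' := G) (convex_Ici _)
      hcont.continuousOn ?_ ?_ ?_
    · rw [interior_Ici]; intro x hx; exact (hF x (hζ₂pos.trans hx)).hasDerivWithinAt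
    · rw [interior_Ici]; intro x hx; exact (hG x (hζ₂pos.trans hx)).hasDerivWithinAt
    · rw [interior_Ici]
      intro x hx
      have hx0 : 0 < x := hζ₂pos.trans hx
      have h2 : u₂ < Real.sqrt x := by
        rw [← hsz2]; exact Real.sqrt_lt_sqrt hζ₂pos.le hx
      have h1 : u₁ < Real.sqrt x := h12.trans h2
      have hnum : 0 ≤ (Real.sqrt x)^2 - c * Real.sqrt x + 1/2 := by
        rw [key]
        exact mul_nonneg (by linarith) (by linarith)
      rw [hGdef]
      exact div_nonneg (mul_nonneg (Real.exp_pos _).le hnum) (by positivity)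
end

section
/- (Convexity of the lower convex envelope f̄₂.) Let P > 2 and define f₂ : ℝ → ℝ by f₂(B) = 1/2 − (1/2)·erf(√B − √P). Set ζ₁ = ((√P − √(P−2))/2)² and ζ₂ = ((√P + √(P−2))/2)². Suppose τ₁ and τ₂ satisfy 0 < τ₁ ≤ ζ₁ and τ₂ ≥ ζ₂, let c = (f₂(τ₂) − f₂(τ₁))/(τ₂ − τ₁) and d = f₂(τ₂) − c·τ₂, and suppose that deriv f₂ τ₁ = c, deriv f₂ τ₂ = c, and f₂(B) ≥ c·B + d for all B ≥ 0. Define f̄₂ : ℝ → ℝ by f̄₂(B) = f₂(B) for B ∈ [0, τ₁] ∪ [τ₂, ∞) and f̄₂(B) = c·B + d for B ∈ (τ₁, τ₂). Then f̄₂ is convex on [0, ∞) (ConvexOn ℝ (Set.Ici 0) f̄₂). -/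
open MeasureTheory ProbabilityTheory Real Set

/-- the auxiliary function in the variable u = √B -/
noncomputable def auxh (q u : ℝ) : ℝ := -(Real.exp (-(u - q)^2) / (2 * Real.sqrt Real.pi * u))

lemma auxh_hasDerivAt (q u : ℝ) (hu : u ≠ 0) :
    HasDerivAt (auxh q)
      (Real.exp (-(u - q)^2) * (2*u^2 - 2*q*u + 1) / (2 * Real.sqrt Real.pi * u^2)) u := by
  have hπ : Real.sqrt Real.pi ≠ 0 := by positivity
  have he : HasDerivAt (fun u : ℝ => Real.exp (-(u - q)^2))
      (Real.exp (-(u - q)^2) * (-2 * (u - q))) u := by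
    have h1 : HasDerivAt (fun u : ℝ => -(u - q)^2) (-2 * (u - q)) u := by
      have := (((hasDerivAt_id u).sub_const q).pow 2).neg
      refine this.congr_deriv ?_
      simp [id]
    exact (Real.hasDerivAt_exp _).comp u h1
  have hden : HasDerivAt (fun u : ℝ => 2 * Real.sqrt Real.pi * u)
      (2 * Real.sqrt Real.pi) u := by
    simpa using (hasDerivAt_id u).const_mul (2 * Real.sqrt Real.pi)
  have hdiv := (he.div hden (by positivity : 2 * Real.sqrt Real.pi * u ≠ 0)).neg
  refine hdiv.congr_deriv ?_
  field_simp
  ring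

lemma f2_hasDerivAt (q B : ℝ) (hB : 0 < B) :
    HasDerivAt (fun B => 1/2 - (1/2) * erf (Real.sqrt B - q)) (auxh q (Real.sqrt B)) B := by
  have hπ : Real.sqrt Real.pi ≠ 0 := by positivity
  have hsB : Real.sqrt B ≠ 0 := by positivity
  have hin : HasDerivAt (fun B : ℝ => Real.sqrt B - q) (1 / (2 * Real.sqrt B)) B :=
    (Real.hasDerivAt_sqrt hB.ne').sub_const q
  have herf := (erf_hasDerivAt (Real.sqrt B - q)).comp B hin
  have h := (herf.const_mul (1/2 : ℝ)).neg.const_add (1/2 : ℝ)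
  refine h.congr_deriv ?_
  unfold auxh
  field_simp

lemma auxh_mono (q : ℝ) (s : Set ℝ) (hconv : Convex ℝ s) (hs : ∀ u ∈ s, 0 < u)
    (hq : ∀ u ∈ interior s, 0 ≤ 2*u^2 - 2*q*u + 1) : MonotoneOn (auxh q) s := by
  apply monotoneOn_of_deriv_nonneg hconv
  · intro u hu
    exact ((auxh_hasDerivAt q u (hs u hu).ne').continuousAt).continuousWithinAt
  · intro u hu
    exact ((auxh_hasDerivAt q u (hs u (interior_subset hu)).ne').differentiableAt).differentiableWithinAt
  · intro u hu
    have hu0 : 0 < u := hs u (interior_subset hu)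
    rw [(auxh_hasDerivAt q u hu0.ne').deriv]
    have h1 := hq u hu
    positivity

set_option maxHeartbeats 1000000 in
theorem stmt_8 (P : ℝ) (hP : 2 < P)
    (f₂ : ℝ → ℝ) (hf₂ : ∀ B, f₂ B = 1/2 - (1/2) * erf (Real.sqrt B - Real.sqrt P))
    (ζ₁ ζ₂ τ₁ τ₂ c d : ℝ)
    (hζ₁ : ζ₁ = ((Real.sqrt P - Real.sqrt (P - 2)) / 2)^2)
    (hζ₂ : ζ₂ = ((Real.sqrt P + Real.sqrt (P - 2)) / 2)^2)
    (hτ₁ : 0 < τ₁) (hτ₁ζ : τ₁ ≤ ζ₁) (hτ₂ζ : ζ₂ ≤ τ₂)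
    (hc : c = (f₂ τ₂ - f₂ τ₁) / (τ₂ - τ₁)) (hd : d = f₂ τ₂ - c * τ₂)
    (hderiv₁ : deriv f₂ τ₁ = c) (hderiv₂ : deriv f₂ τ₂ = c)
    (hline : ∀ B : ℝ, 0 ≤ B → f₂ B ≥ c * B + d)
    (f₂bar : ℝ → ℝ)
    (hbar₁ : ∀ B ∈ Set.Icc 0 τ₁ ∪ Set.Ici τ₂, f₂bar B = f₂ B)
    (hbar₂ : ∀ B ∈ Set.Ioo τ₁ τ₂, f₂bar B = c * B + d) :
    ConvexOn ℝ (Set.Ici 0) f₂bar := by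
  set q := Real.sqrt P with hqdef
  set r := Real.sqrt (P - 2) with hrdef
  have hP0 : (0:ℝ) < P := by linarith
  have hq2 : q ^ 2 = P := Real.sq_sqrt hP0.le
  have hr2 : r ^ 2 = P - 2 := Real.sq_sqrt (by linarith)
  have hq0 : 0 < q := Real.sqrt_pos.mpr hP0
  have hr0 : 0 < r := Real.sqrt_pos.mpr (by linarith)
  set u₁ : ℝ := (q - r)/2 with hu₁def
  set u₂ : ℝ := (q + r)/2 with hu₂def
  have hu₁0 : 0 < u₁ := by
    have : r < q := by nlinarith
    simp only [hu₁def]; linarith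
  have hu₁₂ : u₁ < u₂ := by simp only [hu₁def, hu₂def]; linarith
  have hsum : u₁ + u₂ = q := by simp only [hu₁def, hu₂def]; ring
  have hprod : u₁ * u₂ = 1/2 := by
    have : u₁ * u₂ = (q^2 - r^2)/4 := by simp only [hu₁def, hu₂def]; ring
    rw [this, hq2, hr2]; ring
  have hζ₁u : ζ₁ = u₁ ^ 2 := hζ₁
  have hζ₂u : ζ₂ = u₂ ^ 2 := hζ₂
  have hτ₁₂ : τ₁ < τ₂ := by
    have h12 : u₁ ^ 2 < u₂ ^ 2 := by nlinarith
    calc τ₁ ≤ ζ₁ := hτ₁ζ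
    _ = u₁ ^ 2 := hζ₁u
    _ < u₂ ^ 2 := h12
    _ = ζ₂ := hζ₂u.symm
    _ ≤ τ₂ := hτ₂ζ
  have hτ₂0 : 0 < τ₂ := hτ₁.trans hτ₁₂
  have hffun : f₂ = fun B => 1/2 - (1/2) * erf (Real.sqrt B - q) := funext hf₂
  have hf2d : ∀ B, 0 < B → HasDerivAt f₂ (auxh q (Real.sqrt B)) B := by
    intro B hB; rw [hffun]; exact f2_hasDerivAt q B hB
  have hφτ₁ : auxh q (Real.sqrt τ₁) = c := by rw [← hderiv₁, (hf2d τ₁ hτ₁).deriv]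
  have hφτ₂ : auxh q (Real.sqrt τ₂) = c := by rw [← hderiv₂, (hf2d τ₂ hτ₂0).deriv]
  have hE1 : f₂ τ₁ = c * τ₁ + d := by
    have hne : τ₂ - τ₁ ≠ 0 := by linarith
    have hc' : c * (τ₂ - τ₁) = f₂ τ₂ - f₂ τ₁ := by
      rw [hc]; field_simp
    rw [hd]; linarith
  have hE2 : f₂ τ₂ = c * τ₂ + d := by rw [hd]; ring
  -- monotonicity of auxh on the two regions
  have hmono1 : MonotoneOn (auxh q) (Ioc 0 u₁) := by
    refine auxh_mono q _ (convex_Ioc _ _) (fun u hu => hu.1) ?_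
    intro u hu
    rw [interior_Ioc] at hu
    have key : 2*u^2 - 2*q*u + 1 = 2*((u₁ - u)*(u₂ - u)) := by
      linear_combination 2*u*hsum - 2*hprod
    rw [key]
    have := mul_nonneg (by linarith [hu.2] : (0:ℝ) ≤ u₁ - u)
      (by linarith [hu.2, hu₁₂] : (0:ℝ) ≤ u₂ - u)
    linarith
  have hmono2 : MonotoneOn (auxh q) (Ici u₂) := by
    refine auxh_mono q _ (convex_Ici _) (fun u hu => lt_of_lt_of_le (hu₁0.trans hu₁₂) hu) ?_
    intro u hu
    rw [interior_Ici] at hu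
    rw [mem_Ioi] at hu
    have key : 2*u^2 - 2*q*u + 1 = 2*((u - u₁)*(u - u₂)) := by
      linear_combination 2*u*hsum - 2*hprod
    rw [key]
    have := mul_nonneg (by linarith [hu₁₂] : (0:ℝ) ≤ u - u₁)
      (by linarith : (0:ℝ) ≤ u - u₂)
    linarith
  have M1 : ∀ x y : ℝ, 0 < x → x ≤ y → y ≤ ζ₁ →
      auxh q (Real.sqrt x) ≤ auxh q (Real.sqrt y) := by
    intro x y hx hxy hy
    have hyu : Real.sqrt y ≤ u₁ := by
      calc Real.sqrt y ≤ Real.sqrt ζ₁ := Real.sqrt_le_sqrt hy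
      _ = u₁ := by rw [hζ₁u, Real.sqrt_sq hu₁0.le]
    have hsx : Real.sqrt x ∈ Ioc 0 u₁ :=
      ⟨Real.sqrt_pos.mpr hx, le_trans (Real.sqrt_le_sqrt hxy) hyu⟩
    have hsy : Real.sqrt y ∈ Ioc 0 u₁ :=
      ⟨Real.sqrt_pos.mpr (hx.trans_le hxy), hyu⟩
    exact hmono1 hsx hsy (Real.sqrt_le_sqrt hxy)
  have M2 : ∀ x y : ℝ, ζ₂ ≤ x → x ≤ y →
      auxh q (Real.sqrt x) ≤ auxh q (Real.sqrt y) := by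
    intro x y hx hxy
    have hxu : u₂ ≤ Real.sqrt x := by
      calc u₂ = Real.sqrt ζ₂ := by rw [hζ₂u, Real.sqrt_sq (hu₁0.trans hu₁₂).le]
      _ ≤ Real.sqrt x := Real.sqrt_le_sqrt hx
    exact hmono2 hxu (le_trans hxu (Real.sqrt_le_sqrt hxy)) (Real.sqrt_le_sqrt hxy)
  -- junction derivatives
  have hbarτ₁ : f₂bar τ₁ = f₂ τ₁ := hbar₁ τ₁ (Or.inl ⟨hτ₁.le, le_refl _⟩)
  have hbarτ₂ : f₂bar τ₂ = f₂ τ₂ := hbar₁ τ₂ (Or.inr self_mem_Ici)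
  have hlineD : ∀ x : ℝ, HasDerivAt (fun B => c * B + d) c x := by
    intro x
    simpa using ((hasDerivAt_id x).const_mul c).add_const d
  have hf₂τ₁ : HasDerivAt f₂ c τ₁ := hφτ₁ ▸ hf2d τ₁ hτ₁
  have hf₂τ₂ : HasDerivAt f₂ c τ₂ := hφτ₂ ▸ hf2d τ₂ hτ₂0
  have hJ₁ : HasDerivAt f₂bar c τ₁ := by
    have hL : HasDerivWithinAt f₂bar c (Iic τ₁) τ₁ := by
      refine (hf₂τ₁.hasDerivWithinAt).congr_of_eventuallyEq ?_ hbarτ₁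
      filter_upwards [Ioc_mem_nhdsLE_of_mem (⟨hτ₁, le_refl τ₁⟩ : τ₁ ∈ Ioc 0 τ₁)] with B hB
      exact hbar₁ B (Or.inl ⟨hB.1.le, hB.2⟩)
    have hR : HasDerivWithinAt f₂bar c (Ici τ₁) τ₁ := by
      refine ((hlineD τ₁).hasDerivWithinAt).congr_of_eventuallyEq ?_ (by rw [hbarτ₁, hE1])
      filter_upwards [Ico_mem_nhdsGE_of_mem (⟨le_refl τ₁, hτ₁₂⟩ : τ₁ ∈ Ico τ₁ τ₂)] with B hB
      rcases eq_or_lt_of_le hB.1 with h | h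
      · rw [← h, hbarτ₁, hE1]
      · exact hbar₂ B ⟨h, hB.2⟩
    have h := hL.union hR
    rw [Iic_union_Ici] at h
    exact hasDerivWithinAt_univ.mp h
  have hJ₂ : HasDerivAt f₂bar c τ₂ := by
    have hL : HasDerivWithinAt f₂bar c (Iic τ₂) τ₂ := by
      refine ((hlineD τ₂).hasDerivWithinAt).congr_of_eventuallyEq ?_ (by rw [hbarτ₂, hE2])
      filter_upwards [Ioc_mem_nhdsLE_of_mem (⟨hτ₁₂, le_refl τ₂⟩ : τ₂ ∈ Ioc τ₁ τ₂)] with B hB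
      rcases eq_or_lt_of_le hB.2 with h | h
      · rw [h, hbarτ₂, hE2]
      · exact hbar₂ B ⟨hB.1, h⟩
    have hR : HasDerivWithinAt f₂bar c (Ici τ₂) τ₂ := by
      refine (hf₂τ₂.hasDerivWithinAt).congr_of_eventuallyEq ?_ hbarτ₂
      filter_upwards [self_mem_nhdsWithin] with B hB
      exact hbar₁ B (Or.inr hB)
    have h := hL.union hR
    rw [Iic_union_Ici] at h
    exact hasDerivWithinAt_univ.mp h
  -- the global derivative function
  set D : ℝ → ℝ := fun x =>
    if x ≤ τ₁ then auxh q (Real.sqrt x) else if x ≤ τ₂ then c else auxh q (Real.sqrt x)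
    with hDdef
  have hD1 : ∀ x : ℝ, x ≤ τ₁ → D x = auxh q (Real.sqrt x) := by
    intro x h; simp only [hDdef, if_pos h]
  have hD2 : ∀ x : ℝ, τ₁ < x → x ≤ τ₂ → D x = c := by
    intro x h1 h2; simp only [hDdef, if_neg (not_le.mpr h1), if_pos h2]
  have hD3 : ∀ x : ℝ, τ₂ < x → D x = auxh q (Real.sqrt x) := by
    intro x h
    simp only [hDdef, if_neg (not_le.mpr (hτ₁₂.trans h)), if_neg (not_le.mpr h)]
  have hder : ∀ x ∈ Ioi (0:ℝ), HasDerivAt f₂bar (D x) x := by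
    intro x hx
    rw [mem_Ioi] at hx
    rcases lt_trichotomy x τ₁ with h1 | h1 | h1
    · rw [hD1 x h1.le]
      refine (hf2d x hx).congr_of_eventuallyEq ?_
      filter_upwards [Ioo_mem_nhds hx h1] with B hB
      exact hbar₁ B (Or.inl ⟨hB.1.le, hB.2.le⟩)
    · subst h1
      rw [hD1 x (le_refl x), hφτ₁]
      exact hJ₁
    · rcases lt_trichotomy x τ₂ with h2 | h2 | h2
      · rw [hD2 x h1 h2.le]
        refine ((hlineD x)).congr_of_eventuallyEq ?_
        filter_upwards [Ioo_mem_nhds h1 h2] with B hB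
        exact hbar₂ B hB
      · subst h2
        rw [hD2 x h1 (le_refl x)]
        exact hJ₂
      · rw [hD3 x h2]
        refine (hf2d x hx).congr_of_eventuallyEq ?_
        filter_upwards [Ioi_mem_nhds h2] with B hB
        exact hbar₁ B (Or.inr (mem_Ici.mpr (le_of_lt hB)))
  have hmonoD : MonotoneOn D (Ioi (0:ℝ)) := by
    intro x hx y hy hxy
    rw [mem_Ioi] at hx hy
    by_cases hyτ₁ : y ≤ τ₁
    · rw [hD1 x (hxy.trans hyτ₁), hD1 y hyτ₁]
      exact M1 x y hx hxy (hyτ₁.trans hτ₁ζ)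
    · push_neg at hyτ₁
      have hcy : c ≤ D y := by
        by_cases hyτ₂ : y ≤ τ₂
        · rw [hD2 y hyτ₁ hyτ₂]
        · push_neg at hyτ₂
          rw [hD3 y hyτ₂, ← hφτ₂]
          exact M2 τ₂ y hτ₂ζ hyτ₂.le
      by_cases hxτ₁ : x ≤ τ₁
      · rw [hD1 x hxτ₁]
        have hxc : auxh q (Real.sqrt x) ≤ c := by
          rw [← hφτ₁]
          exact M1 x τ₁ hx hxτ₁ hτ₁ζ
        linarith
      · push_neg at hxτ₁
        by_cases hxτ₂ : x ≤ τ₂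
        · rw [hD2 x hxτ₁ hxτ₂]; exact hcy
        · push_neg at hxτ₂
          rw [hD3 x hxτ₂, hD3 y (hxτ₂.trans_le hxy)]
          exact M2 x y (hτ₂ζ.trans hxτ₂.le) hxy
  -- continuity
  have herfc : Continuous erf := by
    have : Differentiable ℝ erf := fun x => (erf_hasDerivAt x).differentiableAt
    exact this.continuous
  have hf₂cont : Continuous f₂ := by
    rw [hffun]
    exact continuous_const.sub (continuous_const.mul
      (herfc.comp (Real.continuous_sqrt.sub continuous_const)))
  have hcont : ContinuousOn f₂bar (Ici (0:ℝ)) := by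
    intro x hx
    rcases eq_or_lt_of_le (mem_Ici.mp hx) with h | h
    · rw [← h]
      refine (hf₂cont.continuousWithinAt).congr_of_eventuallyEq ?_
        (hbar₁ 0 (Or.inl ⟨le_refl _, hτ₁.le⟩))
      filter_upwards [Ico_mem_nhdsGE_of_mem (⟨le_refl (0:ℝ), hτ₁⟩ : (0:ℝ) ∈ Ico 0 τ₁)] with B hB
      exact hbar₁ B (Or.inl ⟨hB.1, hB.2.le⟩)
    · exact (hder x h).continuousAt.continuousWithinAt
  refine MonotoneOn.convexOn_of_deriv (convex_Ici 0) hcont ?_ ?_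
  · rw [interior_Ici]
    intro x hx
    exact (hder x hx).differentiableAt.differentiableWithinAt
  · rw [interior_Ici]
    intro x hx y hy hxy
    rw [(hder x hx).deriv, (hder y hy).deriv]
    exact hmonoD hx hy hxy
end

section
/- (Concavity lemma used in the proof of Proposition 4.1.) Let P ≥ 0. The function z ↦ Real.log (1/2 + (1/2)·erf(√z + √(P/2))) is concave on [0, ∞) (ConcaveOn ℝ (Set.Ici 0) of this function). -/
open MeasureTheory ProbabilityTheory Real Set

namespace Stmt11Aux

noncomputable def Phi (x : ℝ) : ℝ := 1/2 + (1/2) * erf x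
noncomputable def phi (x : ℝ) : ℝ := (Real.sqrt Real.pi)⁻¹ * Real.exp (-x^2)

lemma sqrt_pi_pos : 0 < Real.sqrt Real.pi := Real.sqrt_pos.2 Real.pi_pos

lemma phi_pos (x : ℝ) : 0 < phi x :=
  mul_pos (inv_pos.2 sqrt_pi_pos) (Real.exp_pos _)

lemma gauss_integrable : Integrable (fun t : ℝ => Real.exp (-t^2)) := by
  simpa [neg_mul, one_mul] using integrable_exp_neg_mul_sq (one_pos)

lemma gauss_Iic_zero : (∫ t in Iic (0:ℝ), Real.exp (-t^2)) = Real.sqrt Real.pi / 2 := by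
  have h1 : (∫ t in Iic (0:ℝ), Real.exp (-(-t)^2)) = ∫ t in Ioi (-(0:ℝ)), Real.exp (-t^2) :=
    integral_comp_neg_Iic 0 (fun t => Real.exp (-t^2))
  have h2 : (∫ t in Ioi (0:ℝ), Real.exp (-1 * t^2)) = Real.sqrt (Real.pi / 1) / 2 :=
    integral_gaussian_Ioi 1
  simp only [neg_neg, neg_zero, neg_sq] at h1 h2
  rw [h1]
  simpa [neg_mul, one_mul] using h2

lemma Phi_eq (x : ℝ) : Phi x = (Real.sqrt Real.pi)⁻¹ * ∫ t in Iic x, Real.exp (-t^2) := by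
  have hsub : (∫ t in Iic x, Real.exp (-t^2)) - (∫ t in Iic (0:ℝ), Real.exp (-t^2))
      = ∫ t in (0:ℝ)..x, Real.exp (-t^2) :=
    intervalIntegral.integral_Iic_sub_Iic gauss_integrable.integrableOn gauss_integrable.integrableOn
  have h0 := gauss_Iic_zero
  have hπ : Real.sqrt Real.pi ≠ 0 := sqrt_pi_pos.ne'
  rw [Phi, erf, ← hsub, h0]
  field_simp
  ring

lemma Phi_pos (x : ℝ) : 0 < Phi x := by
  rw [Phi_eq]
  refine mul_pos (inv_pos.2 sqrt_pi_pos) ?_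
  rw [setIntegral_pos_iff_support_of_nonneg_ae
    (Filter.Eventually.of_forall fun t => (Real.exp_pos _).le)
    gauss_integrable.integrableOn]
  have : (Function.support fun t : ℝ => Real.exp (-t^2)) = univ := by
    ext t; simp [Function.mem_support, (Real.exp_pos _).ne']
  rw [this, univ_inter]
  simp

lemma Phi_deriv (x : ℝ) : HasDerivAt Phi (phi x) x := by
  have hc : Continuous (fun t : ℝ => Real.exp (-t^2)) := by continuity
  have hF : HasDerivAt (fun y => ∫ t in (0:ℝ)..y, Real.exp (-t^2)) (Real.exp (-x^2)) x :=
    (hc.integral_hasStrictDerivAt 0 x).hasDerivAt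
  have : HasDerivAt Phi ((1/2) * ((2 / Real.sqrt Real.pi) * Real.exp (-x^2))) x := by
    unfold Phi erf
    exact ((hF.const_mul (2 / Real.sqrt Real.pi)).const_mul (1/2)).const_add (1/2)
  convert this using 1
  unfold phi
  ring

lemma phi_deriv (x : ℝ) : HasDerivAt phi (-2 * x * phi x) x := by
  have h1 : HasDerivAt (fun t : ℝ => -t^2) (-(2*x)) x := by
    simpa using (hasDerivAt_pow 2 x).fun_neg
  have h2 : HasDerivAt phi _ x := (h1.exp).const_mul (Real.sqrt Real.pi)⁻¹
  convert h2 using 1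
  unfold phi
  ring

lemma exp_tendsto_atBot : Filter.Tendsto (fun t : ℝ => Real.exp (-t^2)) Filter.atBot (nhds 0) := by
  apply Real.tendsto_exp_atBot.comp
  apply Filter.tendsto_neg_atTop_atBot.comp
  have h : Filter.Tendsto (fun t : ℝ => |t|^2) Filter.atBot Filter.atTop :=
    (Filter.tendsto_pow_atTop (two_ne_zero)).comp Filter.tendsto_abs_atBot_atTop
  simpa [sq_abs] using h

lemma deriv_inner (t : ℝ) : HasDerivAt (fun t : ℝ => Real.exp (-t^2))
    ((-2*t) * Real.exp (-t^2)) t := by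
  have h1 : HasDerivAt (fun s : ℝ => -s^2) (-(2*t)) t := by
    simpa using (hasDerivAt_pow 2 t).fun_neg
  convert h1.exp using 1
  ring

lemma tgauss_integrable : Integrable (fun t : ℝ => (-2*t) * Real.exp (-t^2)) := by
  have := (integrable_mul_exp_neg_mul_sq (one_pos)).const_mul (-2)
  simpa [neg_mul, one_mul, mul_assoc] using this

lemma key (x : ℝ) : -2 * x * Phi x ≤ phi x := by
  rcases le_or_gt 0 x with hx | hx
  · nlinarith [Phi_pos x, phi_pos x]
  · rw [Phi_eq, phi]
    have hI2 : (∫ t in Iic x, (-2*t) * Real.exp (-t^2)) = Real.exp (-x^2) := by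
      rw [integral_Iic_of_hasDerivAt_of_tendsto' (fun t _ => deriv_inner t)
        tgauss_integrable.integrableOn exp_tendsto_atBot]
      ring
    have hmono : (∫ t in Iic x, (-2*x) * Real.exp (-t^2))
        ≤ ∫ t in Iic x, (-2*t) * Real.exp (-t^2) := by
      refine setIntegral_mono_on (gauss_integrable.const_mul (-2*x)).integrableOn
        tgauss_integrable.integrableOn measurableSet_Iic (fun t ht => ?_)
      have h1 : -2*x ≤ -2*t := by simp at ht; linarith
      exact mul_le_mul_of_nonneg_right h1 (Real.exp_pos _).le
    rw [integral_const_mul] at hmono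
    rw [hI2] at hmono
    have hπ : (0:ℝ) < (Real.sqrt Real.pi)⁻¹ := inv_pos.2 sqrt_pi_pos
    calc -2 * x * ((Real.sqrt Real.pi)⁻¹ * ∫ t in Iic x, Real.exp (-t^2))
        = (Real.sqrt Real.pi)⁻¹ * (-2 * x * ∫ t in Iic x, Real.exp (-t^2)) := by ring
      _ ≤ (Real.sqrt Real.pi)⁻¹ * Real.exp (-x^2) :=
          mul_le_mul_of_nonneg_left hmono hπ.le

noncomputable def g (x : ℝ) : ℝ := Real.log (Phi x)

lemma g_deriv (x : ℝ) : HasDerivAt g (phi x / Phi x) x :=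
  (Phi_deriv x).log (Phi_pos x).ne'

lemma g_deriv2 (x : ℝ) : HasDerivAt (fun y => phi y / Phi y)
    (((-2*x*phi x) * Phi x - phi x * phi x) / (Phi x)^2) x :=
  (phi_deriv x).div (Phi_deriv x) (Phi_pos x).ne'

lemma g_concave : ConcaveOn ℝ univ g := by
  refine concaveOn_of_hasDerivWithinAt2_nonpos convex_univ
    (f' := fun x => phi x / Phi x)
    (f'' := fun x => ((-2*x*phi x) * Phi x - phi x * phi x) / (Phi x)^2)
    (fun x _ => (g_deriv x).continuousAt.continuousWithinAt)
    (fun x _ => (g_deriv x).hasDerivWithinAt)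
    (fun x _ => (g_deriv2 x).hasDerivWithinAt)
    (fun x _ => ?_)
  apply div_nonpos_of_nonpos_of_nonneg _ (sq_nonneg _)
  nlinarith [mul_le_mul_of_nonneg_right (key x) (phi_pos x).le]

lemma g_mono : Monotone g := by
  refine (strictMono_of_deriv_pos (fun x => ?_)).monotone
  rw [(g_deriv x).deriv]
  exact div_pos (phi_pos x) (Phi_pos x)

lemma image_eq (c : ℝ) (hc : 0 ≤ c) :
    (fun z : ℝ => Real.sqrt z + c) '' (Ici 0) = Ici c := by
  ext w
  constructor
  · rintro ⟨z, _, rfl⟩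
    exact le_add_of_nonneg_left (Real.sqrt_nonneg z)
  · intro hw
    refine ⟨(w - c)^2, mem_Ici.2 (sq_nonneg _), ?_⟩
    have hcw : c ≤ w := hw
    show Real.sqrt ((w - c)^2) + c = w
    rw [Real.sqrt_sq (by linarith)]
    ring

end Stmt11Aux

open Stmt11Aux in
theorem stmt_11 (P : ℝ) (hP : 0 ≤ P) :
    ConcaveOn ℝ (Set.Ici 0)
      (fun z : ℝ => Real.log (1/2 + (1/2) * erf (Real.sqrt z + Real.sqrt (P/2)))) := by
  set c := Real.sqrt (P/2) with hc
  have hc0 : 0 ≤ c := Real.sqrt_nonneg _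
  have hinner : ConcaveOn ℝ (Ici 0) (fun z : ℝ => Real.sqrt z + c) := by
    have := Real.strictConcaveOn_sqrt.concaveOn.add_const c
    simpa [Pi.add_def] using this
  have himg := image_eq c hc0
  have hg : ConcaveOn ℝ ((fun z : ℝ => Real.sqrt z + c) '' (Ici 0)) g := by
    rw [himg]
    exact g_concave.subset (subset_univ _) (convex_Ici c)
  have hmono : MonotoneOn g ((fun z : ℝ => Real.sqrt z + c) '' (Ici 0)) :=
    g_mono.monotoneOn _
  exact ConcaveOn.comp hg hinner hmono
end

section
/- (Concavity lemma used in the proof of Proposition 4.2.) Let 0 ≤ P ≤ 4. The function z ↦ Real.log (1/2 + (1/2)·erf(√z − √(P/2))) is concave on [0, ∞) (ConcaveOn ℝ (Set.Ici 0) of this function). -/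
open MeasureTheory ProbabilityTheory Real Set

namespace Stmt12Aux

lemma integrable_g : Integrable (fun t : ℝ => Real.exp (-t^2)) := by
  have := integrable_exp_neg_mul_sq (one_pos)
  simpa using this

noncomputable def Gf (w : ℝ) : ℝ := (Real.sqrt Real.pi)⁻¹ * ∫ t in Set.Iic w, Real.exp (-t^2)

noncomputable def φf (w : ℝ) : ℝ := (Real.sqrt Real.pi)⁻¹ * Real.exp (-w^2)

lemma sqrt_pi_pos : 0 < Real.sqrt Real.pi := Real.sqrt_pos.2 Real.pi_pos

lemma φf_pos (w : ℝ) : 0 < φf w := by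
  unfold φf; positivity

lemma Iic_integral_pos (w : ℝ) : 0 < ∫ t in Set.Iic w, Real.exp (-t^2) := by
  rw [setIntegral_pos_iff_support_of_nonneg_ae]
  · have : (Function.support fun t : ℝ => Real.exp (-t^2)) = Set.univ := by
      ext t; simp [Function.support, (Real.exp_pos _).ne']
    rw [this, Set.univ_inter]
    simp [Real.volume_Iic]
  · exact Filter.Eventually.of_forall fun t => (Real.exp_pos _).le
  · exact integrable_g.integrableOn

lemma Gf_pos (w : ℝ) : 0 < Gf w :=
  mul_pos (inv_pos.2 sqrt_pi_pos) (Iic_integral_pos w)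

lemma gauss_Iic_zero : (∫ t in Set.Iic (0:ℝ), Real.exp (-t^2)) = Real.sqrt Real.pi / 2 := by
  have h1 : (∫ t in Set.Iic (0:ℝ), Real.exp (-t^2))
      = ∫ t in Set.Ioi (0:ℝ), Real.exp (-t^2) := by
    have := integral_comp_neg_Ioi (0:ℝ) (fun t => Real.exp (-t^2))
    simp only [neg_zero] at this
    rw [← this]
    congr 1
    ext t
    ring_nf
  have h2 := integral_gaussian_Ioi (1:ℝ)
  simp only [one_mul, neg_mul, div_one] at h2
  rw [h1]
  rw [show (fun t : ℝ => Real.exp (-t^2)) = fun t : ℝ => Real.exp (-(t^2)) from rfl]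
  rw [h2]

lemma erf_repr (w : ℝ) : 1/2 + 1/2 * erf w = Gf w := by
  have hsub := intervalIntegral.integral_Iic_sub_Iic (μ := volume)
    (f := fun t : ℝ => Real.exp (-t^2)) integrable_g.integrableOn integrable_g.integrableOn
    (a := 0) (b := w)
  unfold erf Gf
  rw [← hsub, gauss_Iic_zero]
  have h : Real.sqrt Real.pi ≠ 0 := sqrt_pi_pos.ne'
  field_simp
  ring

lemma Gf_mono : Monotone Gf := by
  intro a b hab
  unfold Gf
  apply mul_le_mul_of_nonneg_left _ (inv_pos.2 sqrt_pi_pos).le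
  apply setIntegral_mono_set integrable_g.integrableOn
    (Filter.Eventually.of_forall fun t => (Real.exp_pos _).le)
  exact (Set.Iic_subset_Iic.2 hab).eventuallyLE

lemma hasDerivAt_Gf (w : ℝ) : HasDerivAt Gf (φf w) w := by
  have heq : Gf = fun w => (Real.sqrt Real.pi)⁻¹ *
      ((∫ t in Set.Iic (0:ℝ), Real.exp (-t^2)) + ∫ t in (0:ℝ)..w, Real.exp (-t^2)) := by
    funext w
    unfold Gf
    rw [← intervalIntegral.integral_Iic_sub_Iic (μ := volume)
      integrable_g.integrableOn integrable_g.integrableOn]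
    ring
  rw [heq]
  have hcont : Continuous (fun t : ℝ => Real.exp (-t^2)) := by continuity
  have hd : HasDerivAt (fun w : ℝ => ∫ t in (0:ℝ)..w, Real.exp (-t^2))
      (Real.exp (-w^2)) w :=
    intervalIntegral.integral_hasDerivAt_right (integrable_g.intervalIntegrable)
      (hcont.stronglyMeasurableAtFilter _ _) hcont.continuousAt
  simpa [φf] using ((hd.const_add _).const_mul ((Real.sqrt Real.pi)⁻¹))

lemma hasDerivAt_φf (w : ℝ) : HasDerivAt φf (-(2*w) * φf w) w := by
  have h1 : HasDerivAt (fun w : ℝ => -w^2) (-(2*w)) w := by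
    simpa using (hasDerivAt_pow 2 w).fun_neg
  have h2 := h1.exp
  have h3 := h2.const_mul ((Real.sqrt Real.pi)⁻¹)
  rw [show -(2*w) * φf w = (Real.sqrt Real.pi)⁻¹ * (Real.exp (-w^2) * -(2*w)) by unfold φf; ring]
  exact h3

/-- Mills-type bound. -/
lemma mills {w : ℝ} (hw : w < 0) :
    -(2*w) * ∫ t in Set.Iic w, Real.exp (-t^2) ≤ Real.exp (-w^2) := by
  -- ∫_{Iic w} t e^{-t^2} = -exp(-w^2)/2
  have hF : ∀ x ∈ Set.Iic w, HasDerivAt (fun t : ℝ => -Real.exp (-t^2)/2)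
      (x * Real.exp (-x^2)) x := by
    intro x _
    have h1 : HasDerivAt (fun t : ℝ => -t^2) (-(2*x)) x := by
      simpa using (hasDerivAt_pow 2 x).fun_neg
    have h2 := (h1.exp.neg).div_const 2
    rw [show x * Real.exp (-x^2) = -(Real.exp (-x^2) * -(2*x)) / 2 by ring]
    exact h2
  have hint : IntegrableOn (fun t : ℝ => t * Real.exp (-t^2)) (Set.Iic w) := by
    have := integrable_mul_exp_neg_mul_sq (one_pos)
    simp only [one_mul, neg_mul] at this
    exact this.integrableOn
  have htend : Filter.Tendsto (fun t : ℝ => -Real.exp (-t^2)/2) Filter.atBot (nhds 0) := by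
    have h1 : Filter.Tendsto (fun t : ℝ => -t^2) Filter.atBot Filter.atBot := by
      have hsq : Filter.Tendsto (fun t : ℝ => t^2) Filter.atBot Filter.atTop := by
        have := Filter.Tendsto.atBot_mul_atBot₀ (f := fun t : ℝ => t) (g := fun t : ℝ => t)
          Filter.tendsto_id Filter.tendsto_id
        simpa [sq] using this
      exact Filter.tendsto_neg_atBot_iff.2 hsq
    have := (Real.tendsto_exp_atBot).comp h1
    have h2 : Filter.Tendsto (fun t : ℝ => Real.exp (-t^2)) Filter.atBot (nhds 0) := this
    have h3 := (h2.neg).div_const 2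
    simpa using h3
  have hval : (∫ t in Set.Iic w, t * Real.exp (-t^2)) = -Real.exp (-w^2)/2 := by
    have := MeasureTheory.integral_Iic_of_hasDerivAt_of_tendsto' hF hint htend
    simpa using this
  -- pointwise bound: on Iic w, exp(-t^2) ≤ (t/w) * exp(-t^2)
  have hmono : (∫ t in Set.Iic w, Real.exp (-t^2))
      ≤ ∫ t in Set.Iic w, (t/w) * Real.exp (-t^2) := by
    apply setIntegral_mono_on integrable_g.integrableOn
    · have : IntegrableOn (fun t : ℝ => (t * Real.exp (-t^2)) * w⁻¹) (Set.Iic w) :=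
        hint.mul_const _
      simpa [div_eq_mul_inv, mul_comm, mul_assoc, mul_left_comm] using this
    · exact measurableSet_Iic
    · intro t ht
      have ht' : t ≤ w := ht
      have h1 : (1:ℝ) ≤ t/w := by
        rw [le_div_iff_of_neg hw]
        simpa using ht'
      nlinarith [Real.exp_pos (-t^2)]
  have hdiv : (∫ t in Set.Iic w, (t/w) * Real.exp (-t^2))
      = w⁻¹ * ∫ t in Set.Iic w, t * Real.exp (-t^2) := by
    rw [← integral_const_mul]
    congr 1; ext t; ring
  rw [hdiv, hval] at hmono
  have hw2 : 0 < -(2*w) := by linarith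
  calc -(2*w) * ∫ t in Set.Iic w, Real.exp (-t^2)
      ≤ -(2*w) * (w⁻¹ * (-Real.exp (-w^2)/2)) := by
        apply mul_le_mul_of_nonneg_left hmono hw2.le
    _ = Real.exp (-w^2) := by
        have hwne : w ≠ 0 := hw.ne
        field_simp

lemma key_ineq (w : ℝ) : -(2*w) * Gf w ≤ φf w := by
  rcases le_or_gt 0 w with hw | hw
  · have h1 : -(2*w) * Gf w ≤ 0 :=
      mul_nonpos_of_nonpos_of_nonneg (by linarith) (Gf_pos w).le
    exact h1.trans (φf_pos w).le
  · have := mills hw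
    unfold Gf φf
    calc -(2*w) * ((Real.sqrt Real.pi)⁻¹ * ∫ t in Set.Iic w, Real.exp (-t^2))
        = (Real.sqrt Real.pi)⁻¹ * (-(2*w) * ∫ t in Set.Iic w, Real.exp (-t^2)) := by ring
      _ ≤ (Real.sqrt Real.pi)⁻¹ * Real.exp (-w^2) :=
          mul_le_mul_of_nonneg_left this (inv_pos.2 sqrt_pi_pos).le

noncomputable def HH (w : ℝ) : ℝ := Real.log (Gf w)

lemma hasDerivAt_HH (w : ℝ) : HasDerivAt HH (φf w / Gf w) w := by
  have := (Real.hasDerivAt_log (Gf_pos w).ne').comp w (hasDerivAt_Gf w)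
  rw [div_eq_inv_mul]; exact this

lemma deriv_HH : deriv HH = fun w => φf w / Gf w :=
  funext fun w => (hasDerivAt_HH w).deriv

lemma hasDerivAt_deriv_HH (w : ℝ) : HasDerivAt (fun w => φf w / Gf w)
    ((-(2*w) * φf w * Gf w - φf w * φf w) / (Gf w)^2) w :=
  (hasDerivAt_φf w).div (hasDerivAt_Gf w) (Gf_pos w).ne'

lemma HH_concave : ConcaveOn ℝ Set.univ HH := by
  apply concaveOn_univ_of_deriv2_nonpos
  · exact fun w => (hasDerivAt_HH w).differentiableAt
  · rw [deriv_HH]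
    exact fun w => (hasDerivAt_deriv_HH w).differentiableAt
  · intro w
    have h2 : deriv^[2] HH w = ((-(2*w) * φf w * Gf w - φf w * φf w) / (Gf w)^2) := by
      have : deriv^[2] HH = deriv (deriv HH) := rfl
      rw [this, deriv_HH, (hasDerivAt_deriv_HH w).deriv]
    rw [h2]
    apply div_nonpos_of_nonpos_of_nonneg _ (sq_nonneg _)
    have hk := key_ineq w
    nlinarith [φf_pos w, Gf_pos w]

lemma HH_mono : Monotone HH := fun a b hab =>
  Real.log_le_log (Gf_pos a) (Gf_mono hab)

end Stmt12Aux

theorem stmt_12 (P : ℝ) (hP0 : 0 ≤ P) (hP4 : P ≤ 4) :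
    ConcaveOn ℝ (Set.Ici 0)
      (fun z : ℝ => Real.log (1/2 + (1/2) * erf (Real.sqrt z - Real.sqrt (P/2)))) := by
  open Stmt12Aux in
  set c := Real.sqrt (P/2) with hc
  have heq : (fun z : ℝ => Real.log (1/2 + (1/2) * erf (Real.sqrt z - c)))
      = fun z : ℝ => HH (Real.sqrt z - c) := by
    funext z
    rw [show (1:ℝ)/2 + (1/2) * erf (Real.sqrt z - c) = Gf (Real.sqrt z - c) from
      erf_repr _]
    rfl
  rw [heq]
  refine ⟨convex_Ici 0, fun x hx y hy a b ha hb hab => ?_⟩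
  have hsqrt := Real.strictConcaveOn_sqrt.concaveOn.2 hx hy ha hb hab
  simp only [smul_eq_mul] at hsqrt ⊢
  have h1 : a * HH (Real.sqrt x - c) + b * HH (Real.sqrt y - c)
      ≤ HH (a * (Real.sqrt x - c) + b * (Real.sqrt y - c)) := by
    have := HH_concave.2 (Set.mem_univ (Real.sqrt x - c)) (Set.mem_univ (Real.sqrt y - c))
      ha hb hab
    simpa using this
  have h2 : HH (a * (Real.sqrt x - c) + b * (Real.sqrt y - c))
      ≤ HH (Real.sqrt (a * x + b * y) - c) := by
    apply Stmt12Aux.HH_mono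
    have : a * (Real.sqrt x - c) + b * (Real.sqrt y - c)
        = a * Real.sqrt x + b * Real.sqrt y - c := by
      have : a * c + b * c = c := by rw [← add_mul, hab, one_mul]
      ring_nf
      linarith [this]
    rw [this]
    linarith [hsqrt]
  linarith
end

section
/- (Lemma 4.2, first bullet, and monotonicity.) Let P ≥ 0 and define g₂ : ℝ → ℝ by g₂(B) = 1 − (1/2 + (1/2)·erf(√(B/2) − √(P/2)))². Then g₂ is monotonically decreasing on [0, ∞) (AntitoneOn g₂ (Set.Ici 0)), and there exists χ₁ > 0 such that g₂ is convex on [0, χ₁] (ConvexOn ℝ (Set.Icc 0 χ₁) g₂). -/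
open MeasureTheory ProbabilityTheory Real Set

namespace Stmt15Aux

lemma cont_gauss : Continuous fun t : ℝ => Real.exp (-t ^ 2) :=
  Real.continuous_exp.comp (continuous_pow 2).neg

lemma erf_hasDerivAt (x : ℝ) :
    HasDerivAt erf ((2 / Real.sqrt Real.pi) * Real.exp (-x ^ 2)) x := by
  have h := intervalIntegral.integral_hasDerivAt_right
    (cont_gauss.intervalIntegrable 0 x)
    (cont_gauss.stronglyMeasurableAtFilter _ _)
    cont_gauss.continuousAt
  exact h.const_mul _

lemma erf_continuous : Continuous erf :=
  continuous_iff_continuousAt.2 fun x => (erf_hasDerivAt x).continuousAt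

lemma erf_monotone : Monotone erf := by
  apply monotone_of_hasDerivAt_nonneg (f' := fun x => (2 / Real.sqrt Real.pi) * Real.exp (-x ^ 2))
    erf_hasDerivAt
  intro x
  positivity

lemma gauss_integrable : Integrable (fun t : ℝ => Real.exp (-t ^ 2)) := by
  have := integrable_exp_neg_mul_sq (b := 1) one_pos
  simpa using this

lemma gauss_Ioi : ∫ t in Set.Ioi (0:ℝ), Real.exp (-t ^ 2) = Real.sqrt Real.pi / 2 := by
  have := integral_gaussian_Ioi 1
  simpa using this

lemma gauss_Iic : ∫ t in Set.Iic (0:ℝ), Real.exp (-t ^ 2) = Real.sqrt Real.pi / 2 := by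
  have h := integral_comp_neg_Iic (0:ℝ) (fun t => Real.exp (-t ^ 2))
  simp only [neg_sq, neg_zero] at h
  rw [h, gauss_Ioi]

lemma I_le (x : ℝ) : (∫ t in (0:ℝ)..x, Real.exp (-t ^ 2)) ≤ Real.sqrt Real.pi / 2 := by
  rcases le_or_gt 0 x with hx | hx
  · rw [intervalIntegral.integral_of_le hx, ← gauss_Ioi]
    exact setIntegral_mono_set gauss_integrable.integrableOn
      (Filter.Eventually.of_forall fun t => (Real.exp_pos _).le)
      (HasSubset.Subset.eventuallyLE Set.Ioc_subset_Ioi_self)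
  · rw [intervalIntegral.integral_symm]
    have h0 : 0 ≤ ∫ t in x..0, Real.exp (-t ^ 2) :=
      intervalIntegral.integral_nonneg hx.le (fun t _ => (Real.exp_pos _).le)
    have := Real.sqrt_nonneg Real.pi
    linarith

lemma neg_lt_I (x : ℝ) :
    -(Real.sqrt Real.pi / 2) < ∫ t in (0:ℝ)..x, Real.exp (-t ^ 2) := by
  have hpi : 0 < Real.sqrt Real.pi := Real.sqrt_pos.2 Real.pi_pos
  rcases le_or_gt 0 x with hx | hx
  · have h0 : 0 ≤ ∫ t in (0:ℝ)..x, Real.exp (-t ^ 2) :=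
      intervalIntegral.integral_nonneg hx (fun t _ => (Real.exp_pos _).le)
    linarith
  · rw [intervalIntegral.integral_symm, intervalIntegral.integral_of_le hx.le]
    have hsplit : (∫ t in Set.Iic x, Real.exp (-t ^ 2))
        + (∫ t in Set.Ioc x 0, Real.exp (-t ^ 2)) = Real.sqrt Real.pi / 2 := by
      rw [← gauss_Iic, ← setIntegral_union (Set.Iic_disjoint_Ioc le_rfl) measurableSet_Ioc
        gauss_integrable.integrableOn gauss_integrable.integrableOn,
        Set.Iic_union_Ioc_eq_Iic hx.le]
    have hpos : 0 < ∫ t in Set.Iic x, Real.exp (-t ^ 2) := by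
      rw [setIntegral_pos_iff_support_of_nonneg_ae
        (Filter.Eventually.of_forall fun t => (Real.exp_pos _).le)
        gauss_integrable.integrableOn]
      have : Function.support (fun t : ℝ => Real.exp (-t ^ 2)) = Set.univ := by
        ext t; simp [(Real.exp_pos _).ne']
      rw [this, Set.univ_inter, Real.volume_Iic]
      simp
    linarith

lemma erf_le_one (x : ℝ) : erf x ≤ 1 := by
  have hpi : 0 < Real.sqrt Real.pi := Real.sqrt_pos.2 Real.pi_pos
  have h := I_le x
  have h2 : (2 / Real.sqrt Real.pi) * (∫ t in (0:ℝ)..x, Real.exp (-t ^ 2))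
      ≤ (2 / Real.sqrt Real.pi) * (Real.sqrt Real.pi / 2) :=
    mul_le_mul_of_nonneg_left h (by positivity)
  have h3 : (2 / Real.sqrt Real.pi) * (Real.sqrt Real.pi / 2) = 1 := by
    field_simp
  rw [erf]; linarith

lemma neg_one_lt_erf (x : ℝ) : -1 < erf x := by
  have hpi : 0 < Real.sqrt Real.pi := Real.sqrt_pos.2 Real.pi_pos
  have h := neg_lt_I x
  have h2 : (2 / Real.sqrt Real.pi) * (-(Real.sqrt Real.pi / 2))
      < (2 / Real.sqrt Real.pi) * (∫ t in (0:ℝ)..x, Real.exp (-t ^ 2)) :=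
    mul_lt_mul_of_pos_left h (by positivity)
  have h3 : (2 / Real.sqrt Real.pi) * (-(Real.sqrt Real.pi / 2)) = -1 := by
    field_simp
  rw [erf]; linarith

/-! Basic functions -/

noncomputable def u (sP x : ℝ) : ℝ := Real.sqrt (x/2) - sP
noncomputable def E (sP x : ℝ) : ℝ := Real.exp (-(u sP x) ^ 2)
noncomputable def q (sP x : ℝ) : ℝ := 1/2 + 1/2 * erf (u sP x)
noncomputable def Df (x : ℝ) : ℝ := 1 / (2 * Real.sqrt (x/2)) * (1/2)
noncomputable def Dd (x : ℝ) : ℝ :=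
  -(2 * (1 / (2 * Real.sqrt (x/2)) * (1/2))) / (2 * Real.sqrt (x/2)) ^ 2 * (1/2)
noncomputable def Ed (sP x : ℝ) : ℝ := E sP x * -(2 * u sP x * Df x)
noncomputable def qd (sP x : ℝ) : ℝ := 1/2 * (2 / Real.sqrt Real.pi * E sP x * Df x)
noncomputable def qdd (sP x : ℝ) : ℝ :=
  1/2 * (2 / Real.sqrt Real.pi * Ed sP x * Df x + 2 / Real.sqrt Real.pi * E sP x * Dd x)
noncomputable def G (sP x : ℝ) : ℝ := -(2 * (q sP x * qd sP x))
noncomputable def Gd (sP x : ℝ) : ℝ := -(2 * (qd sP x * qd sP x + q sP x * qdd sP x))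

lemma q_nonneg (sP x : ℝ) : 0 ≤ q sP x := by
  have := neg_one_lt_erf (u sP x); rw [q]; linarith

lemma q_le_one (sP x : ℝ) : q sP x ≤ 1 := by
  have := erf_le_one (u sP x); rw [q]; linarith

lemma q_mono (sP : ℝ) {a b : ℝ} (hab : a ≤ b) : q sP a ≤ q sP b := by
  have h1 : Real.sqrt (a/2) ≤ Real.sqrt (b/2) := Real.sqrt_le_sqrt (by linarith)
  have := erf_monotone (show u sP a ≤ u sP b by rw [u, u]; linarith)
  rw [q, q]; linarith

lemma q0_pos (sP : ℝ) : 0 < q sP 0 := by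
  have := neg_one_lt_erf (u sP 0); rw [q]; linarith

lemma q_continuous (sP : ℝ) : Continuous (q sP) := by
  unfold q u
  exact continuous_const.add (continuous_const.mul (erf_continuous.comp
    ((Real.continuous_sqrt.comp (continuous_id.div_const 2)).sub continuous_const)))

/-! Derivatives, for `x > 0`. -/

lemma hasDerivAt_sqrt_half {x : ℝ} (hx : 0 < x) :
    HasDerivAt (fun y => Real.sqrt (y/2)) (Df x) x := by
  have h1 : HasDerivAt (fun y : ℝ => y / 2) (1/2) x := by
    simpa using (hasDerivAt_id x).div_const 2
  exact (hasDerivAt_sqrt (by positivity : x/2 ≠ 0)).comp x h1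

lemma hasDerivAt_u (sP : ℝ) {x : ℝ} (hx : 0 < x) :
    HasDerivAt (u sP) (Df x) x :=
  (hasDerivAt_sqrt_half hx).sub_const sP

lemma hasDerivAt_q (sP : ℝ) {x : ℝ} (hx : 0 < x) :
    HasDerivAt (q sP) (qd sP x) x := by
  have h := ((erf_hasDerivAt (u sP x)).comp x (hasDerivAt_u sP hx)).const_mul (1/2)
  exact h.const_add (1/2)

lemma hasDerivAt_E (sP : ℝ) {x : ℝ} (hx : 0 < x) :
    HasDerivAt (E sP) (Ed sP x) x := by
  have h1 : HasDerivAt (fun y => -(u sP y) ^ 2) (-(2 * u sP x * Df x)) x := by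
    have := ((hasDerivAt_u sP hx).fun_pow 2).neg
    refine this.congr_deriv ?_
    push_cast
    ring
  have h2 := (Real.hasDerivAt_exp (-(u sP x) ^ 2)).comp x h1
  exact h2

lemma sqrt_half_pos {x : ℝ} (hx : 0 < x) : 0 < Real.sqrt (x/2) :=
  Real.sqrt_pos.2 (by linarith)

lemma hasDerivAt_Df {x : ℝ} (hx : 0 < x) :
    HasDerivAt Df (Dd x) x := by
  have hs := sqrt_half_pos hx
  have h1 : HasDerivAt (fun y => 2 * Real.sqrt (y/2)) (2 * Df x) x :=
    (hasDerivAt_sqrt_half hx).const_mul 2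
  have h2 := (h1.inv (by positivity)).mul_const (1/2 : ℝ)
  have hfun : (fun y => (2 * Real.sqrt (y/2))⁻¹ * (1/2 : ℝ)) = Df := by
    funext y; simp only [Df, one_div]
  simp only [Pi.inv_apply] at h2
  rw [hfun] at h2
  exact h2

lemma hasDerivAt_qd (sP : ℝ) {x : ℝ} (hx : 0 < x) :
    HasDerivAt (qd sP) (qdd sP x) x := by
  have h1 := ((hasDerivAt_E sP hx).const_mul (2 / Real.sqrt Real.pi)).mul (hasDerivAt_Df hx)
  exact h1.const_mul (1/2)

lemma hasDerivAt_g (sP : ℝ) {x : ℝ} (hx : 0 < x) :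
    HasDerivAt (fun y => 1 - q sP y ^ 2) (G sP x) x := by
  have h1 : HasDerivAt (fun y => q sP y ^ 2) (2 * (q sP x * qd sP x)) x := by
    have := (hasDerivAt_q sP hx).fun_pow 2
    refine this.congr_deriv ?_
    push_cast
    ring
  simpa [G] using h1.const_sub 1

lemma hasDerivAt_G (sP : ℝ) {x : ℝ} (hx : 0 < x) :
    HasDerivAt (G sP) (Gd sP x) x := by
  have h1 := ((hasDerivAt_q sP hx).mul (hasDerivAt_qd sP hx)).const_mul 2
  exact h1.neg

/-! Sign of the second derivative near zero. -/

lemma Gd_nonneg (sP : ℝ) (hsP : 0 ≤ sP) {x : ℝ} (hx : 0 < x)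
    (hs1 : Real.sqrt (x/2) ≤ 1)
    (hsK : Real.sqrt (x/2) * (1 / Real.sqrt Real.pi + 2 + 2 * sP) ≤ q sP 0) :
    0 ≤ Gd sP x := by
  have hpi : 0 < Real.sqrt Real.pi := Real.sqrt_pos.2 Real.pi_pos
  set s := Real.sqrt (x/2) with hs_def
  have hs : 0 < s := sqrt_half_pos hx
  have hDf : Df x = 1 / (4 * s) := by
    rw [Df, ← hs_def]; field_simp; ring
  have hDd : Dd x = -(1 / (16 * s ^ 3)) := by
    rw [Dd, ← hs_def]; field_simp; ring
  have hq0 : q sP 0 ≤ q sP x := q_mono sP hx.le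
  have hq1 : q sP x ≤ 1 := q_le_one sP x
  have hqn : 0 ≤ q sP x := q_nonneg sP x
  have hE1 : E sP x ≤ 1 := by
    rw [E]; exact Real.exp_le_one_iff.2 (neg_nonpos_of_nonneg (sq_nonneg _))
  have hE0 : 0 < E sP x := Real.exp_pos _
  have hu_lb : -(s + sP) ≤ u sP x := by rw [u, ← hs_def]; linarith
  have hu_ub : u sP x ≤ s + sP := by rw [u, ← hs_def]; linarith
  -- key algebraic identity
  have key : qd sP x * qd sP x + q sP x * qdd sP x
      = (E sP x / Real.sqrt Real.pi) *
        ((E sP x / Real.sqrt Real.pi) * s - 2 * q sP x * u sP x * s - q sP x) / (16 * s ^ 3) := by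
    rw [qd, qdd, Ed, hDf, hDd]
    obtain ⟨c, hc, hcpi⟩ : ∃ c, 0 < c ∧ Real.sqrt Real.pi = c := ⟨_, hpi, rfl⟩
    rw [hcpi]
    field_simp
    ring
  have hnum : (E sP x / Real.sqrt Real.pi) * s - 2 * q sP x * u sP x * s - q sP x ≤ 0 := by
    have h1 : (E sP x / Real.sqrt Real.pi) * s ≤ s * (1 / Real.sqrt Real.pi) := by
      rw [div_eq_mul_inv, one_div]
      have := mul_le_mul_of_nonneg_right hE1 (le_of_lt (inv_pos.2 hpi))
      nlinarith
    have h2 : -(2 * q sP x * u sP x * s) ≤ 2 * (s + sP) * s := by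
      have e1 : q sP x * -(u sP x) ≤ q sP x * (s + sP) :=
        mul_le_mul_of_nonneg_left (by linarith) hqn
      have e2 : q sP x * (s + sP) ≤ s + sP := by nlinarith
      have e3 : s * (q sP x * -(u sP x)) ≤ s * (s + sP) :=
        mul_le_mul_of_nonneg_left (e1.trans e2) hs.le
      nlinarith [e3]
    have h3 : s * (1 / Real.sqrt Real.pi) + 2 * (s + sP) * s ≤
        s * (1 / Real.sqrt Real.pi + 2 + 2 * sP) := by
      nlinarith
    have h4 : s * (1 / Real.sqrt Real.pi + 2 + 2 * sP) ≤ q sP 0 := hsK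
    linarith
  rw [Gd, key]
  have hfrac : (E sP x / Real.sqrt Real.pi) *
      ((E sP x / Real.sqrt Real.pi) * s - 2 * q sP x * u sP x * s - q sP x) / (16 * s ^ 3) ≤ 0 := by
    apply div_nonpos_of_nonpos_of_nonneg
    · exact mul_nonpos_of_nonneg_of_nonpos (by positivity) hnum
    · positivity
  linarith

/-! Main auxiliary lemma. -/

lemma main (sP : ℝ) (hsP : 0 ≤ sP) :
    AntitoneOn (fun B => 1 - q sP B ^ 2) (Set.Ici 0) ∧
    ∃ χ₁ : ℝ, 0 < χ₁ ∧ ConvexOn ℝ (Set.Icc 0 χ₁) (fun B => 1 - q sP B ^ 2) := by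
  constructor
  · intro a _ b _ hab
    have h1 : q sP a ≤ q sP b := q_mono sP hab
    have h2 : 0 ≤ q sP a := q_nonneg sP a
    have := pow_le_pow_left₀ h2 h1 2
    simp only
    linarith
  · have hpi : 0 < Real.sqrt Real.pi := Real.sqrt_pos.2 Real.pi_pos
    set K : ℝ := 1 / Real.sqrt Real.pi + 2 + 2 * sP with hK_def
    have hK : 0 < K := by positivity
    have hq0 := q0_pos sP
    set χ₁ : ℝ := min 1 ((q sP 0 / K) ^ 2) with hχ_def
    have hχ : 0 < χ₁ := lt_min one_pos (by positivity)
    refine ⟨χ₁, hχ, ?_⟩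
    apply convexOn_of_hasDerivWithinAt2_nonneg (convex_Icc 0 χ₁)
      (f' := G sP) (f'' := Gd sP)
    · exact (continuous_const.sub ((q_continuous sP).pow 2)).continuousOn
    · intro x hx
      rw [interior_Icc] at hx
      exact ((hasDerivAt_g sP hx.1).hasDerivWithinAt)
    · intro x hx
      rw [interior_Icc] at hx
      exact ((hasDerivAt_G sP hx.1).hasDerivWithinAt)
    · intro x hx
      rw [interior_Icc] at hx
      obtain ⟨hx0, hxχ⟩ := hx
      have hs : Real.sqrt (x/2) ^ 2 = x/2 := Real.sq_sqrt (by linarith)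
      have hsχ : x < χ₁ := hxχ
      have hle1 : x ≤ 1 := le_of_lt (lt_of_lt_of_le hsχ (min_le_left _ _))
      have hleq : x ≤ (q sP 0 / K) ^ 2 := le_of_lt (lt_of_lt_of_le hsχ (min_le_right _ _))
      have hs1 : Real.sqrt (x/2) ≤ 1 := by
        rw [show (1:ℝ) = Real.sqrt 1 by simp]
        exact Real.sqrt_le_sqrt (by linarith)
      have hsK : Real.sqrt (x/2) * K ≤ q sP 0 := by
        have h1 : Real.sqrt (x/2) ≤ q sP 0 / K := by
          rw [show q sP 0 / K = Real.sqrt ((q sP 0 / K) ^ 2) by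
            rw [Real.sqrt_sq (by positivity)]]
          exact Real.sqrt_le_sqrt (by linarith)
        calc Real.sqrt (x/2) * K ≤ (q sP 0 / K) * K :=
              mul_le_mul_of_nonneg_right h1 hK.le
          _ = q sP 0 := by field_simp
      exact Gd_nonneg sP hsP hx0 hs1 hsK

end Stmt15Aux

theorem stmt_15 (P : ℝ) (hP : 0 ≤ P)
    (g₂ : ℝ → ℝ)
    (hg₂ : ∀ B, g₂ B = 1 - (1/2 + (1/2) * erf (Real.sqrt (B/2) - Real.sqrt (P/2)))^2) :
    AntitoneOn g₂ (Set.Ici 0) ∧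
    ∃ χ₁ : ℝ, 0 < χ₁ ∧ ConvexOn ℝ (Set.Icc 0 χ₁) g₂ := by
  have hg : g₂ = fun B => 1 - Stmt15Aux.q (Real.sqrt (P/2)) B ^ 2 := by
    funext B
    rw [hg₂ B]
    simp [Stmt15Aux.q, Stmt15Aux.u]
  rw [hg]
  exact Stmt15Aux.main (Real.sqrt (P/2)) (Real.sqrt_nonneg _)
end
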